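/- Let Ω be a finite set, let π be a strictly positive probability vector on Ω, and let p be a transition rate kernel on Ω reversible with respect to π whose underlying graph is connected. Define the capacity c(x,y) = π(x)·p(x,y) for x ≠ y and c(x,x) = 0, the generator L f(x) = Σ_{y∈Ω} p(x,y)(f(y) − f(x)), the Dirichlet form E(f,g) = Σ_{x∈Ω} π(x)·f(x)·(−L g)(x), and W_{c,2} via the flux formulation. Then for every probability vector μ on Ω there exists ψ : Ω → ℝ such that (−L ψ)(x) = μ(x)/π(x) − 1 for all x ∈ Ω and W_{c,2}(μ, π)² = E(ψ, ψ). -/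

import Mathlib

open Finset RealInnerProductSpace

lemma sum_symmetrize {Ω : Type*} [Fintype Ω] (c : Ω → Ω → ℝ) (hs : ∀ x y, c x y = c y x)
    (f : Ω → ℝ) :
    ∑ x, ∑ y, c x y * (f x - f y) * (f x - f y)
      = 2 * ∑ x, ∑ y, c x y * f x * (f x - f y) := by
  have h1 : ∑ x, ∑ y, c x y * f y * (f x - f y)
      = ∑ x, ∑ y, c y x * f x * (f y - f x) := Finset.sum_comm
  have h2 : ∑ x, ∑ y, c y x * f x * (f y - f x)
      = - ∑ x, ∑ y, c x y * f x * (f x - f y) := by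
    rw [← Finset.sum_neg_distrib]
    refine Finset.sum_congr rfl fun x _ => ?_
    rw [← Finset.sum_neg_distrib]
    exact Finset.sum_congr rfl fun y _ => by rw [hs x y]; ring
  have h3 : ∑ x, ∑ y, c x y * (f x - f y) * (f x - f y)
      = ∑ x, ∑ y, c x y * f x * (f x - f y) - ∑ x, ∑ y, c x y * f y * (f x - f y) := by
    rw [← Finset.sum_sub_distrib]
    refine Finset.sum_congr rfl fun x _ => ?_
    rw [← Finset.sum_sub_distrib]
    exact Finset.sum_congr rfl fun y _ => by ring
  linarith

lemma exists_potential {Ω : Type*} [Fintype Ω]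
    (c : Ω → Ω → ℝ) (hs : ∀ x y, c x y = c y x) (hnn : ∀ x y, 0 ≤ c x y)
    (hcon : ∀ f : Ω → ℝ, (∀ x y, 0 < c x y → f x = f y) → ∀ x y, f x = f y)
    (g : Ω → ℝ) (hg : ∑ x, g x = 0) :
    ∃ ψ : Ω → ℝ, ∀ x, ∑ y, c x y * (ψ x - ψ y) = g x := by
  classical
  let T : EuclideanSpace ℝ Ω →ₗ[ℝ] EuclideanSpace ℝ Ω :=
    { toFun := fun f => WithLp.toLp 2 (fun x => ∑ y, c x y * (f x - f y))
      map_add' := fun f h => PiLp.ext fun x => by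
        simp only [PiLp.add_apply, PiLp.toLp_apply]
        rw [← Finset.sum_add_distrib]
        exact Finset.sum_congr rfl fun y _ => by ring
      map_smul' := fun r f => PiLp.ext fun x => by
        simp only [PiLp.smul_apply, PiLp.toLp_apply, smul_eq_mul, RingHom.id_apply]
        rw [Finset.mul_sum]
        exact Finset.sum_congr rfl fun y _ => by ring }
  have hT : ∀ (f : EuclideanSpace ℝ Ω) (x : Ω), T f x = ∑ y, c x y * (f x - f y) := fun _ _ => rfl
  have hinner : ∀ (f h : EuclideanSpace ℝ Ω), (inner ℝ f h : ℝ) = ∑ x, f x * h x := by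
    intro f h
    simp [PiLp.inner_apply, RCLike.inner_apply, mul_comm]
  have hsym : T.IsSymmetric := by
    intro f h
    rw [hinner, hinner]
    have e1 : ∑ x, (T f) x * h x = ∑ x, ∑ y, c x y * (f x - f y) * h x := by
      refine Finset.sum_congr rfl fun x _ => ?_
      rw [hT, Finset.sum_mul]
    have e2 : ∑ x, f x * (T h) x = ∑ x, ∑ y, c x y * f x * (h x - h y) := by
      refine Finset.sum_congr rfl fun x _ => ?_
      rw [hT, Finset.mul_sum]
      exact Finset.sum_congr rfl fun y _ => by ring
    rw [e1, e2]
    have key : ∑ x, ∑ y, c x y * f y * h x = ∑ x, ∑ y, c x y * f x * h y := by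
      rw [Finset.sum_comm]
      exact Finset.sum_congr rfl fun a _ => Finset.sum_congr rfl fun b _ => by
        rw [hs b a]
    have l1 : ∑ x, ∑ y, c x y * (f x - f y) * h x
        = ∑ x, ∑ y, c x y * f x * h x - ∑ x, ∑ y, c x y * f y * h x := by
      rw [← Finset.sum_sub_distrib]
      refine Finset.sum_congr rfl fun x _ => ?_
      rw [← Finset.sum_sub_distrib]
      exact Finset.sum_congr rfl fun y _ => by ring
    have l2 : ∑ x, ∑ y, c x y * f x * (h x - h y)
        = ∑ x, ∑ y, c x y * f x * h x - ∑ x, ∑ y, c x y * f x * h y := by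
      rw [← Finset.sum_sub_distrib]
      refine Finset.sum_congr rfl fun x _ => ?_
      rw [← Finset.sum_sub_distrib]
      exact Finset.sum_congr rfl fun y _ => by ring
    rw [l1, l2, key]
  have hle : LinearMap.range T ≤ (LinearMap.ker T)ᗮ := by
    rintro _ ⟨f, rfl⟩
    rw [Submodule.mem_orthogonal]
    intro v hv
    rw [LinearMap.mem_ker] at hv
    rw [← hsym v f, hv, inner_zero_left]
  have hrank : LinearMap.range T = (LinearMap.ker T)ᗮ := by
    apply Submodule.eq_of_le_of_finrank_eq hle
    have r1 := LinearMap.finrank_range_add_finrank_ker T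
    have r2 := Submodule.finrank_add_finrank_orthogonal (K := LinearMap.ker T)
    omega
  have hker : ∀ v : EuclideanSpace ℝ Ω, T v = 0 → ∀ x y, v x = v y := by
    intro v hv
    refine hcon v fun x y hxy => ?_
    have hquad : ∑ x, ∑ y, c x y * (v x - v y) * (v x - v y) = 0 := by
      rw [sum_symmetrize c hs]
      have : ∑ x, ∑ y, c x y * v x * (v x - v y) = ∑ x, v x * (T v) x := by
        refine Finset.sum_congr rfl fun x _ => ?_
        rw [hT, Finset.mul_sum]
        exact Finset.sum_congr rfl fun y _ => by ring
      rw [this, hv]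
      simp
    have hterm : ∀ a ∈ (univ : Finset Ω), ∀ b ∈ (univ : Finset Ω),
        0 ≤ c a b * (v a - v b) * (v a - v b) := by
      intro a _ b _
      rw [mul_assoc]
      exact mul_nonneg (hnn a b) (mul_self_nonneg _)
    have hz : ∀ a ∈ (univ : Finset Ω), ∀ b ∈ (univ : Finset Ω),
        c a b * (v a - v b) * (v a - v b) = 0 := by
      have := (Finset.sum_eq_zero_iff_of_nonneg (fun a _ =>
        Finset.sum_nonneg (fun b _ => hterm a (mem_univ a) b (mem_univ b)))).mp hquad
      intro a ha b hb
      exact (Finset.sum_eq_zero_iff_of_nonneg (fun b hb => hterm a ha b hb)).mp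
        (this a ha) b hb
    have := hz x (mem_univ x) y (mem_univ y)
    have hc0 : (v x - v y) * (v x - v y) = 0 := by
      rcases mul_eq_zero.mp this with h | h
      · rcases mul_eq_zero.mp h with h' | h'
        · exact absurd h' (ne_of_gt hxy)
        · rw [h']; ring
      · rw [h]; ring
    have := mul_self_eq_zero.mp hc0
    linarith
  have hg' : (WithLp.equiv 2 (Ω → ℝ)).symm g ∈ (LinearMap.ker T)ᗮ := by
    rw [Submodule.mem_orthogonal]
    intro v hv
    rw [LinearMap.mem_ker] at hv
    rw [hinner]
    rcases isEmpty_or_nonempty Ω with hΩ | hΩ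
    · simp
    · obtain ⟨x₀⟩ := hΩ
      have hconst := hker v hv
      have : ∑ x, v x * g x = v x₀ * ∑ x, g x := by
        rw [Finset.mul_sum]
        exact Finset.sum_congr rfl fun x _ => by rw [hconst x x₀]
      simp only [WithLp.equiv_symm_apply, PiLp.toLp_apply]
      rw [this, hg, mul_zero]
  rw [← hrank] at hg'
  obtain ⟨ψ, hψ⟩ := hg'
  exact ⟨ψ, fun x => by rw [← hT ψ x, hψ, WithLp.equiv_symm_apply, PiLp.toLp_apply]⟩

/-- The underlying graph of a transition rate kernel `p`: an edge between `x ≠ y`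
whenever `p x y > 0` or `p y x > 0`. -/
def kernelGraph {Ω : Type*} (p : Ω → Ω → ℝ) : SimpleGraph Ω where
  Adj x y := x ≠ y ∧ (0 < p x y ∨ 0 < p y x)
  symm := ⟨fun x y h => ⟨h.1.symm, h.2.symm⟩⟩
  loopless := ⟨fun x h => h.1 rfl⟩

/-- The discrete Wasserstein-2 distance associated with a fixed capacity `c`,
in the dual flux formulation. -/
noncomputable def Wc2 {Ω : Type*} [Fintype Ω] (c : Ω → Ω → ℝ) (μ ν : Ω → ℝ) : ℝ :=
  Real.sqrt (sInf {v : ℝ | ∃ J : Ω → Ω → ℝ,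
    (∀ x y, J x y = - J y x) ∧
    (∀ x y, c x y = 0 → J x y = 0) ∧
    (∀ x, (ν x - μ x) + ∑ y, J x y = 0) ∧
    v = (1 / 2) * ∑ x, ∑ y, if 0 < c x y then J x y ^ 2 / c x y else 0})

/-- Existence of an optimal potential for `W_{c,2}(μ, π)`: there is `ψ` with
`(-L)ψ = dμ/dπ - 1` and `W_{c,2}(μ, π)² = E(ψ, ψ)`. -/
theorem exists_optimal_potential_for_Wc2 {Ω : Type*} [Fintype Ω] [DecidableEq Ω]
    (π : Ω → ℝ) (p : Ω → Ω → ℝ)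
    (hπpos : ∀ x, 0 < π x) (hπsum : ∑ x, π x = 1)
    (hp : ∀ x y, x ≠ y → 0 ≤ p x y) (hrow : ∀ x, ∑ y, p x y = 0)
    (hrev : ∀ x y, π x * p x y = π y * p y x)
    (hconn : (kernelGraph p).Connected)
    (c : Ω → Ω → ℝ) (hc : ∀ x y, c x y = if x = y then 0 else π x * p x y)
    (L : (Ω → ℝ) → Ω → ℝ) (hL : ∀ f x, L f x = ∑ y, p x y * (f y - f x))
    (dirE : (Ω → ℝ) → (Ω → ℝ) → ℝ)
    (hdirE : ∀ f g, dirE f g = ∑ x, π x * f x * (-(L g x))) :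
    ∀ μ : Ω → ℝ, (∀ x, 0 ≤ μ x) → (∑ x, μ x = 1) →
      ∃ ψ : Ω → ℝ, (∀ x, -(L ψ x) = μ x / π x - 1) ∧
        Wc2 c μ π ^ 2 = dirE ψ ψ := by
  intro μ hμ hμsum
  -- basic properties of c
  have hcsymm : ∀ x y, c x y = c y x := by
    intro x y
    rw [hc, hc]
    rcases eq_or_ne x y with rfl | h
    · simp
    · rw [if_neg h, if_neg (Ne.symm h), hrev]
  have hcnn : ∀ x y, 0 ≤ c x y := by
    intro x y
    rw [hc]
    rcases eq_or_ne x y with rfl | h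
    · simp
    · rw [if_neg h]
      exact mul_nonneg (hπpos x).le (hp x y h)
  have hadj : ∀ x y, (kernelGraph p).Adj x y → 0 < c x y := by
    rintro x y ⟨hne, hor⟩
    rcases hor with h | h
    · rw [hc, if_neg hne]
      exact mul_pos (hπpos x) h
    · rw [hcsymm, hc, if_neg (Ne.symm hne)]
      exact mul_pos (hπpos y) h
  have hconn' : ∀ f : Ω → ℝ, (∀ x y, 0 < c x y → f x = f y) → ∀ x y, f x = f y := by
    intro f hf x y
    have key : ∀ {a b : Ω}, (kernelGraph p).Walk a b → f a = f b := by
      intro a b w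
      induction w with
      | nil => rfl
      | cons h _ ih => exact (hf _ _ (hadj _ _ h)).trans ih
    obtain ⟨w⟩ := hconn.preconnected x y
    exact key w
  have hgsum : ∑ x, (μ x - π x) = 0 := by
    rw [Finset.sum_sub_distrib, hμsum, hπsum]; ring
  obtain ⟨ψ, hψ⟩ := exists_potential c hcsymm hcnn hconn' (fun x => μ x - π x) hgsum
  -- relation between L and c
  have hLc : ∀ (f : Ω → ℝ) (x : Ω), π x * (-(L f x)) = ∑ y, c x y * (f x - f y) := by
    intro f x
    have h0 : -(L f x) = ∑ y, p x y * (f x - f y) := by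
      rw [hL, ← Finset.sum_neg_distrib]
      exact Finset.sum_congr rfl fun y _ => by ring
    rw [h0, Finset.mul_sum]
    refine Finset.sum_congr rfl fun y _ => ?_
    rw [hc]
    rcases eq_or_ne x y with rfl | h
    · simp
    · rw [if_neg h]; ring
  have hψL : ∀ x, -(L ψ x) = μ x / π x - 1 := by
    intro x
    have h1 : π x * (-(L ψ x)) = μ x - π x := by rw [hLc]; exact hψ x
    have hπx : (π x) ≠ 0 := (hπpos x).ne'
    field_simp
    linarith [h1]
  -- Dirichlet energy identity
  have hE : dirE ψ ψ = (1/2) * ∑ x, ∑ y, c x y * (ψ x - ψ y) * (ψ x - ψ y) := by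
    rw [hdirE]
    have e : ∑ x, π x * ψ x * (-(L ψ x)) = ∑ x, ∑ y, c x y * ψ x * (ψ x - ψ y) := by
      refine Finset.sum_congr rfl fun x _ => ?_
      rw [show π x * ψ x * (-(L ψ x)) = ψ x * (π x * (-(L ψ x))) by ring, hLc ψ x,
        Finset.mul_sum]
      exact Finset.sum_congr rfl fun y _ => by ring
    rw [e]
    have := sum_symmetrize c hcsymm ψ
    linarith
  -- the optimal flow
  set J₀ : Ω → Ω → ℝ := fun x y => c x y * (ψ x - ψ y) with hJ₀
  have hmem : ∃ J : Ω → Ω → ℝ,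
      (∀ x y, J x y = - J y x) ∧
      (∀ x y, c x y = 0 → J x y = 0) ∧
      (∀ x, (π x - μ x) + ∑ y, J x y = 0) ∧
      dirE ψ ψ = (1 / 2) * ∑ x, ∑ y, if 0 < c x y then J x y ^ 2 / c x y else 0 := by
    refine ⟨J₀, fun x y => by simp only [hJ₀]; rw [hcsymm x y]; ring,
      fun x y h => by simp only [hJ₀]; rw [h, zero_mul],
      fun x => by have := hψ x; simp only [hJ₀]; linarith, ?_⟩
    rw [hE]
    congr 1
    refine Finset.sum_congr rfl fun x _ => Finset.sum_congr rfl fun y _ => ?_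
    by_cases h : 0 < c x y
    · rw [if_pos h]
      field_simp
      ring
    · have hc0 : c x y = 0 := le_antisymm (not_lt.mp h) (hcnn x y)
      rw [if_neg h, hc0]
      ring
  -- lower bound
  have hlb : ∀ v ∈ {v : ℝ | ∃ J : Ω → Ω → ℝ,
      (∀ x y, J x y = - J y x) ∧
      (∀ x y, c x y = 0 → J x y = 0) ∧
      (∀ x, (π x - μ x) + ∑ y, J x y = 0) ∧
      v = (1 / 2) * ∑ x, ∑ y, if 0 < c x y then J x y ^ 2 / c x y else 0},
      dirE ψ ψ ≤ v := by
    rintro v ⟨J, hanti, hzero, hdiv, rfl⟩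
    set D : Ω → Ω → ℝ := fun x y => J x y - c x y * (ψ x - ψ y) with hD
    have hJrow : ∀ x, ∑ y, J x y = μ x - π x := fun x => by have := hdiv x; linarith
    have hDanti : ∀ x y, D x y = - D y x := by
      intro x y
      simp only [hD]
      rw [hanti x y, hcsymm x y]
      ring
    have hDrow : ∀ x, ∑ y, D x y = 0 := by
      intro x
      simp only [hD]
      rw [Finset.sum_sub_distrib, hJrow, hψ]
      ring
    have hDcol : ∀ y, ∑ x, D x y = 0 := by
      intro y
      have : ∑ x, D x y = ∑ x, -(D y x) :=
        Finset.sum_congr rfl fun x _ => by rw [hDanti x y]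
      rw [this, Finset.sum_neg_distrib, hDrow, neg_zero]
    have hcross : ∑ x, ∑ y, (ψ x - ψ y) * D x y = 0 := by
      have e : ∑ x, ∑ y, (ψ x - ψ y) * D x y
          = ∑ x, ∑ y, ψ x * D x y - ∑ x, ∑ y, ψ y * D x y := by
        rw [← Finset.sum_sub_distrib]
        refine Finset.sum_congr rfl fun x _ => ?_
        rw [← Finset.sum_sub_distrib]
        exact Finset.sum_congr rfl fun y _ => by ring
      have e1 : ∑ x, ∑ y, ψ x * D x y = 0 := by
        refine Finset.sum_eq_zero fun x _ => ?_
        rw [← Finset.mul_sum, hDrow, mul_zero]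
      have e2 : ∑ x, ∑ y, ψ y * D x y = 0 := by
        rw [Finset.sum_comm]
        refine Finset.sum_eq_zero fun y _ => ?_
        rw [← Finset.mul_sum, hDcol, mul_zero]
      rw [e, e1, e2, sub_zero]
    have hpt : ∀ x y, (if 0 < c x y then J x y ^ 2 / c x y else 0)
        = (if 0 < c x y then (c x y * (ψ x - ψ y)) ^ 2 / c x y else 0)
          + 2 * ((ψ x - ψ y) * D x y)
          + (if 0 < c x y then D x y ^ 2 / c x y else 0) := by
      intro x y
      by_cases h : 0 < c x y
      · rw [if_pos h, if_pos h, if_pos h]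
        have hJeq : J x y = c x y * (ψ x - ψ y) + D x y := by simp only [hD]; ring
        rw [hJeq]
        field_simp
        ring
      · have hc0 : c x y = 0 := le_antisymm (not_lt.mp h) (hcnn x y)
        have hJ0 : J x y = 0 := hzero x y hc0
        have hD0 : D x y = 0 := by simp only [hD]; rw [hJ0, hc0]; ring
        rw [if_neg h, if_neg h, if_neg h, hD0]
        ring
    have hsplit : ∑ x, ∑ y, (if 0 < c x y then J x y ^ 2 / c x y else 0)
        = (∑ x, ∑ y, (if 0 < c x y then (c x y * (ψ x - ψ y)) ^ 2 / c x y else 0))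
          + 2 * (∑ x, ∑ y, (ψ x - ψ y) * D x y)
          + (∑ x, ∑ y, (if 0 < c x y then D x y ^ 2 / c x y else 0)) := by
      rw [Finset.mul_sum, ← Finset.sum_add_distrib, ← Finset.sum_add_distrib]
      refine Finset.sum_congr rfl fun x _ => ?_
      rw [Finset.mul_sum, ← Finset.sum_add_distrib, ← Finset.sum_add_distrib]
      exact Finset.sum_congr rfl fun y _ => hpt x y
    have hDnn : 0 ≤ ∑ x, ∑ y, (if 0 < c x y then D x y ^ 2 / c x y else 0) := by
      refine Finset.sum_nonneg fun x _ => Finset.sum_nonneg fun y _ => ?_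
      by_cases h : 0 < c x y
      · rw [if_pos h]
        exact div_nonneg (sq_nonneg _) h.le
      · rw [if_neg h]
    obtain ⟨J', h1, h2, h3, h4⟩ := hmem
    -- dirE ψ ψ = (1/2) * ∑∑ J₀-energy; but get it directly:
    have hEeq : dirE ψ ψ
        = (1/2) * ∑ x, ∑ y, (if 0 < c x y then (c x y * (ψ x - ψ y)) ^ 2 / c x y else 0) := by
      rw [hE]
      congr 1
      refine Finset.sum_congr rfl fun x _ => Finset.sum_congr rfl fun y _ => ?_
      by_cases h : 0 < c x y
      · rw [if_pos h]
        field_simp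
      · have hc0 : c x y = 0 := le_antisymm (not_lt.mp h) (hcnn x y)
        rw [if_neg h, hc0]
        ring
    rw [hsplit, hcross]
    rw [hEeq]
    linarith
  -- conclude
  have hSne : ({v : ℝ | ∃ J : Ω → Ω → ℝ,
      (∀ x y, J x y = - J y x) ∧
      (∀ x y, c x y = 0 → J x y = 0) ∧
      (∀ x, (π x - μ x) + ∑ y, J x y = 0) ∧
      v = (1 / 2) * ∑ x, ∑ y, if 0 < c x y then J x y ^ 2 / c x y else 0}).Nonempty := by
    obtain ⟨J, h1, h2, h3, h4⟩ := hmem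
    exact ⟨dirE ψ ψ, J, h1, h2, h3, h4⟩
  have hmem' : dirE ψ ψ ∈ {v : ℝ | ∃ J : Ω → Ω → ℝ,
      (∀ x y, J x y = - J y x) ∧
      (∀ x y, c x y = 0 → J x y = 0) ∧
      (∀ x, (π x - μ x) + ∑ y, J x y = 0) ∧
      v = (1 / 2) * ∑ x, ∑ y, if 0 < c x y then J x y ^ 2 / c x y else 0} := by
    obtain ⟨J, h1, h2, h3, h4⟩ := hmem
    exact ⟨J, h1, h2, h3, h4⟩
  have hsInf : sInf {v : ℝ | ∃ J : Ω → Ω → ℝ,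
      (∀ x y, J x y = - J y x) ∧
      (∀ x y, c x y = 0 → J x y = 0) ∧
      (∀ x, (π x - μ x) + ∑ y, J x y = 0) ∧
      v = (1 / 2) * ∑ x, ∑ y, if 0 < c x y then J x y ^ 2 / c x y else 0} = dirE ψ ψ :=
    le_antisymm (csInf_le ⟨dirE ψ ψ, hlb⟩ hmem') (le_csInf hSne hlb)
  have hEnn : 0 ≤ dirE ψ ψ := by
    rw [hE]
    refine mul_nonneg (by norm_num) (Finset.sum_nonneg fun x _ =>
      Finset.sum_nonneg fun y _ => ?_)
    rw [mul_assoc]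
    exact mul_nonneg (hcnn x y) (mul_self_nonneg _)
  refine ⟨ψ, hψL, ?_⟩
  rw [Wc2, hsInf, Real.sq_sqrt hEnn]
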